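/- Let c>0 and f∈C_p(ℝ) belong to P_c, i.e. δ⁺_{n,k}(y;f)-δ⁻_{n,k}(y;f) ≤ -c for all n∈ℕ₀, k∈ℤ, y∈(0,1). Then c·y(1-y) ≤ f(y) for all y∈(0,1). In particular, f>0 on (0,1). -/
import Mathlib


/-- `C_p(ℝ)`: continuous, periodic with period 1, vanishing at 0. -/
def IsCp (f : ℝ → ℝ) : Prop := Continuous f ∧ (∀ x, f (x + 1) = f x) ∧ f 0 = 0

/-- Forward difference δ⁺_{n,k}(y;f). -/
noncomputable def delP (r : ℕ) (f : ℝ → ℝ) (n : ℕ) (k : ℤ) (y : ℝ) : ℝ :=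
  (f (((k : ℝ) + 1) / (r : ℝ) ^ n) - f (((k : ℝ) + y) / (r : ℝ) ^ n)) / ((1 - y) / (r : ℝ) ^ n)

/-- Backward difference δ⁻_{n,k}(y;f). -/
noncomputable def delM (r : ℕ) (f : ℝ → ℝ) (n : ℕ) (k : ℤ) (y : ℝ) : ℝ :=
  (f (((k : ℝ) + y) / (r : ℝ) ^ n) - f ((k : ℝ) / (r : ℝ) ^ n)) / (y / (r : ℝ) ^ n)

/-- Second-order central difference Δ_{n,k}(y;f). -/
noncomputable def Del (r : ℕ) (f : ℝ → ℝ) (n : ℕ) (k : ℤ) (y : ℝ) : ℝ :=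
  2 * (r : ℝ) ^ n * (delP r f n k y - delM r f n k y)

/-- The operator U: U_ψ(x) = Σ_{j≥0} ψ(rʲx)/rʲ. -/
noncomputable def Uop (r : ℕ) (ψ : ℝ → ℝ) (x : ℝ) : ℝ := ∑' j : ℕ, ψ ((r : ℝ) ^ j * x) / (r : ℝ) ^ j

/-- Distance to the integers. -/
noncomputable def dZ (x : ℝ) : ℝ := Metric.infDist x (Set.range (Int.cast : ℤ → ℝ))

/-- The generalized Takagi function τ_r. -/
noncomputable def tak (r : ℕ) : ℝ → ℝ := Uop r dZ

/-- The class P_c: Δ_{n,k}(y;f) ≤ -2crⁿ for all admissible (n,k,y). -/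
def memP (r : ℕ) (c : ℝ) (f : ℝ → ℝ) : Prop :=
  ∀ (n : ℕ) (k : ℤ), 0 ≤ k → k ≤ (r : ℤ) ^ n - 1 →
    ∀ y ∈ Set.Ioo (0 : ℝ) 1, Del r f n k y ≤ -2 * c * (r : ℝ) ^ n

/-- The parabola q_f(t,x;z). -/
noncomputable def qf (f : ℝ → ℝ) (t x z : ℝ) : ℝ := f z + (x - z) ^ 2 / (2 * t)

theorem stmt1 (r : ℕ) (hr : 2 ≤ r) (c : ℝ) (hc : 0 < c) (f : ℝ → ℝ) (hf : IsCp f)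
    (hP : ∀ (n : ℕ) (k : ℤ), ∀ y ∈ Set.Ioo (0:ℝ) 1,
      delP r f n k y - delM r f n k y ≤ -c) :
    ∀ y ∈ Set.Ioo (0:ℝ) 1, c * y * (1 - y) ≤ f y ∧ 0 < f y := by
  intro y hy
  obtain ⟨hy0, hy1⟩ := hy
  have hf1 : f 1 = 0 := by
    have := hf.2.1 0
    simpa [hf.2.2] using this
  have h := hP 0 0 y ⟨hy0, hy1⟩
  simp only [delP, delM, pow_zero, Int.cast_zero, zero_add, div_one] at h
  rw [hf1, hf.2.2] at h
  have hy1' : (0:ℝ) < 1 - y := by linarith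
  have key : c * y * (1 - y) ≤ f y := by
    rw [div_sub_div _ _ (ne_of_gt hy1') (ne_of_gt hy0)] at h
    rw [div_le_iff₀ (by positivity)] at h
    nlinarith
  have hpos : 0 < c * y * (1 - y) := by positivity
  exact ⟨key, lt_of_lt_of_le hpos key⟩
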